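/- Let θ : A → A^λ be a primitive substitution of constant length λ ≥ 2, let ~θ be its synchronizing part, assume M₀ ∈ 𝒳(θ) satisfies ~θ(M₀)_0 = M₀ and let ũ ∈ 𝒳(θ)^ℕ be the fixed point of ~θ obtained by iterating ~θ at M₀. Then θ is quasi-bijective (there exists n₀ such that for all n ≥ n₀ and all 0 ≤ j < λ^n, |{θ^n(a)_j : a ∈ A}| = c(θ)) if and only if ũ is periodic. -/

import Mathlib

open Filter Topology

/-- `substIter θ l k a j` is the `j`-th letter of `θ^k(a)`, where `θ : A → A^l` is a
substitution of constant length `l` (the letters of `θ(a)` being `θ a 0, …, θ a (l-1)`).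
It is meaningful for `j < l ^ k` and satisfies
`θ^{k+1}(a)_{j'·l + r} = θ(θ^k(a)_{j'})_r`. -/
def substIter {A : Type*} (θ : A → ℕ → A) (l : ℕ) : ℕ → A → ℕ → A
  | 0, a, _ => a
  | k + 1, a, j => θ (substIter θ l k a (j / l)) (j % l)

/-- A substitution of constant length `l` is primitive if some iterate of every letter
contains every letter. -/
def SubstPrimitive {A : Type*} (θ : A → ℕ → A) (l : ℕ) : Prop :=
  ∃ k, 1 ≤ k ∧ ∀ a b : A, ∃ j, j < l ^ k ∧ substIter θ l k a j = b

/-- Primitivity of a substitution restricted to a sub-alphabet `S`. -/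
def SubstPrimitiveOn {A : Type*} (θ : A → ℕ → A) (l : ℕ) (S : Set A) : Prop :=
  ∃ k, 1 ≤ k ∧ ∀ a ∈ S, ∀ b ∈ S, ∃ j, j < l ^ k ∧ substIter θ l k a j = b

/-- The column number of a substitution of constant length `l`, restricted to the
sub-alphabet `S`: the minimal cardinality of a column set `{θ^k(a)_j : a ∈ S}`. -/
noncomputable def columnNumberOn {A : Type*} (θ : A → ℕ → A) (l : ℕ) (S : Set A) : ℕ :=
  sInf { n : ℕ | ∃ k, 1 ≤ k ∧ ∃ j, j < l ^ k ∧
    ((fun a => substIter θ l k a j) '' S).ncard = n }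

/-- The column number `c(θ)` of a substitution of constant length `l`. -/
noncomputable def columnNumber {A : Type*} (θ : A → ℕ → A) (l : ℕ) : ℕ :=
  columnNumberOn θ l Set.univ

/-- The one-sided fixed point `u` of `θ` obtained by iterating `θ` at a letter `a₀`
with `θ(a₀)_0 = a₀`: `u n = θ^k(a₀)_n` for any `k` with `n < l^k`. -/
def substFixedPoint {A : Type*} (θ : A → ℕ → A) (l : ℕ) (a₀ : A) : ℕ → A :=
  fun n => substIter θ l (n + 1) a₀ n

/-- The height `h(θ)`: the largest `m ≥ 1` coprime to `l` dividing
`gcd {r ≥ 1 : u[r] = u[0]}`, i.e. dividing every return time of `u[0]`. -/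
noncomputable def substHeight {A : Type*} (θ : A → ℕ → A) (l : ℕ) (a₀ : A) : ℕ :=
  sSup { m : ℕ | 1 ≤ m ∧ Nat.Coprime m l ∧
    ∀ r : ℕ, 1 ≤ r → substFixedPoint θ l a₀ r = substFixedPoint θ l a₀ 0 → m ∣ r }

/-- The subshift `X_θ ⊆ A^ℤ`: all `x` each of whose finite blocks occurs in some
`θ^k(a)`. -/
def subshift {A : Type*} (θ : A → ℕ → A) (l : ℕ) : Set (ℤ → A) :=
  { x | ∀ (i : ℤ) (n : ℕ), ∃ k, 1 ≤ k ∧ ∃ a : A, ∃ j : ℕ, j + n ≤ l ^ k ∧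
      ∀ m : ℕ, m < n → x (i + (m : ℤ)) = substIter θ l k a (j + m) }

/-- The subshift `X_x ⊆ A^ℤ` generated by a one-sided sequence `x ∈ A^ℕ`: all `z`
each of whose finite blocks occurs in `x`. -/
def subshiftOf {A : Type*} (x : ℕ → A) : Set (ℤ → A) :=
  { z | ∀ (i : ℤ) (n : ℕ), ∃ j : ℕ, ∀ m : ℕ, m < n → z (i + (m : ℤ)) = x (j + m) }

/-- The left shift on `A^ℤ`. -/
def shift {A : Type*} (x : ℤ → A) : ℤ → A := fun n => x (n + 1)

/-- A bounded arithmetic function. -/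
def BoundedSeq (u : ℕ → ℂ) : Prop := ∃ C : ℝ, ∀ n, ‖u n‖ ≤ C

/-- A multiplicative arithmetic function: `u(mn) = u(m)u(n)` for coprime `m, n`. -/
def MultiplicativeSeq (u : ℕ → ℂ) : Prop :=
  ∀ m n : ℕ, Nat.Coprime m n → u (m * n) = u m * u n

/-- An aperiodic arithmetic function: zero mean along every arithmetic progression. -/
def AperiodicSeq (u : ℕ → ℂ) : Prop :=
  ∀ a b : ℕ, 1 ≤ a →
    Tendsto (fun N : ℕ => (N : ℂ)⁻¹ * ∑ n ∈ Finset.Icc 1 N, u (a * n + b)) atTop (nhds 0)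

/-- The Weyl pseudo-metric
`d_W(x,y) = limsup_N sup_{ℓ ≥ 1} (1/N)·#{ℓ ≤ n < ℓ+N : x n ≠ y n}`. -/
noncomputable def weylDist {B : Type*} (x y : ℕ → B) : ℝ :=
  limsup (fun N : ℕ =>
    ⨆ ℓ : ℕ, ⨆ _ : 1 ≤ ℓ,
      (({ n : ℕ | ℓ ≤ n ∧ n < ℓ + N ∧ x n ≠ y n }.ncard : ℝ) / N)) atTop

/-- A periodic sequence. -/
def IsPeriodicSeq {B : Type*} (v : ℕ → B) : Prop :=
  ∃ p, 1 ≤ p ∧ ∀ n, v (n + p) = v n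

/-- Weyl rational almost periodicity: a `d_W`-limit of periodic sequences. -/
def WRAPSeq {B : Type*} (x : ℕ → B) : Prop :=
  ∀ ε : ℝ, 0 < ε → ∃ v : ℕ → B, IsPeriodicSeq v ∧ weylDist x v < ε

/-- The family `𝒳(θ)` of column sets realizing the column number of `θ`. -/
noncomputable def columnSets {A : Type*} (θ : A → ℕ → A) (l : ℕ) : Set (Set A) :=
  { M | (∃ k, 1 ≤ k ∧ ∃ j, j < l ^ k ∧ M = (fun a => substIter θ l k a j) '' Set.univ) ∧
        M.ncard = columnNumber θ l }

/-- The synchronizing part `~θ` of `θ`, as a substitution on subsets of the alphabet: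
`~θ(M)_j = {θ(a)_j : a ∈ M}`. -/
def synchPart {A : Type*} (θ : A → ℕ → A) : Set A → ℕ → Set A :=
  fun M j => (fun a => θ a j) '' M

/-- The joining `θ ∨ ζ` of two substitutions of the same constant length. -/
def joinSub {A B : Type*} (θ : A → ℕ → A) (ζ : B → ℕ → B) : A × B → ℕ → A × B :=
  fun p j => (θ p.1 j, ζ p.2 j)

/-- The pure base `θ^{(h)}` of `θ`: a substitution of length `l` on blocks of length `h`,
`θ^{(h)}(w)_j = θ(w)[jh, (j+1)h−1]`, where `θ(w)` is the concatenation
`θ(w_0)…θ(w_{h-1})`. -/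
def pureBase {A : Type*} (θ : A → ℕ → A) (l h : ℕ) : (Fin h → A) → ℕ → (Fin h → A) :=
  fun w j i => θ (w ⟨(j * h + i.val) / l % h, Nat.mod_lt _ i.pos⟩) ((j * h + i.val) % l)

/-- Iterated cocycle `σ^{(k)}`, with `σ^{(1)} = σ` and
`σ^{(k+1)}(M, j₁·l + j₂) = σ^{(k)}(M, j₁) ∘ σ(~θ^k(M)_{j₁}, j₂)`. -/
def sigmaIter {X : Type*} {c : ℕ} (tilde : X → ℕ → X)
    (σ : X → ℕ → Equiv.Perm (Fin c)) (l : ℕ) : ℕ → X → ℕ → Equiv.Perm (Fin c)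
  | 0, _, _ => 1
  | k + 1, M, j =>
      sigmaIter tilde σ l k M (j / l) * σ (substIter tilde l k M (j / l)) (j % l)

/-- The group extension substitution `Θ̂(g, M)_j = (g ∘ σ(M,j), ~θ(M)_j)`. -/
def hatTheta {X : Type*} {c : ℕ} (tilde : X → ℕ → X)
    (σ : X → ℕ → Equiv.Perm (Fin c)) : Equiv.Perm (Fin c) × X → ℕ → Equiv.Perm (Fin c) × X :=
  fun p j => (p.1 * σ p.2 j, tilde p.2 j)

/-- The group `G` generated by the cocycle values `σ(M, j)`, `M ∈ 𝒳`, `j < l`. -/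
def cocycleGroup {X : Type*} {c : ℕ} (σ : X → ℕ → Equiv.Perm (Fin c)) (l : ℕ) :
    Subgroup (Equiv.Perm (Fin c)) :=
  Subgroup.closure { g | ∃ M : X, ∃ j, j < l ∧ g = σ M j }

/-- A primitive substitution `θ` of constant length is quasi-bijective
(eventually every column set has cardinality `c(θ)`) if and only if the fixed point `ũ`
of its synchronizing part `~θ` (at a letter `M₀ ∈ 𝒳(θ)` with `~θ(M₀)_0 = M₀`) is
periodic. -/
private lemma substIter_add' {B : Type*} (θ : B → ℕ → B) (l : ℕ) (hl : 1 ≤ l) :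
    ∀ (k' k : ℕ) (a : B) (j j' : ℕ), j' < l ^ k' →
      substIter θ l (k + k') a (j * l ^ k' + j') = substIter θ l k' (substIter θ l k a j) j' := by
  intro k'
  induction k' with
  | zero =>
    intro k a j j' hj'
    have h0 : j' = 0 := Nat.lt_one_iff.mp (by simpa using hj')
    subst h0
    simp [substIter]
  | succ k' ih =>
    intro k a j j' hj'
    have hl0 : 0 < l := hl
    have hdiv : (j * l ^ (k' + 1) + j') / l = j * l ^ k' + j' / l := by
      rw [show j * l ^ (k' + 1) + j' = j' + l * (j * l ^ k') by ring]
      rw [Nat.add_mul_div_left _ _ hl0, Nat.add_comm]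
    have hmod : (j * l ^ (k' + 1) + j') % l = j' % l := by
      rw [show j * l ^ (k' + 1) + j' = j' + l * (j * l ^ k') by ring]
      exact Nat.add_mul_mod_self_left j' l _
    show θ (substIter θ l (k + k') a ((j * l ^ (k'+1) + j') / l)) ((j * l ^ (k'+1) + j') % l) = _
    rw [hdiv, hmod, ih k a j (j' / l) (Nat.div_lt_of_lt_mul (by rw [← pow_succ']; exact hj'))]
    rfl

private lemma substIter_synchPart' {A : Type*} (θ : A → ℕ → A) (l : ℕ) :
    ∀ (k : ℕ) (M : Set A) (j : ℕ),
      substIter (synchPart θ) l k M j = (fun a => substIter θ l k a j) '' M := by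
  intro k
  induction k with
  | zero => intro M j; simp [substIter]
  | succ k ih =>
    intro M j
    show synchPart θ (substIter (synchPart θ) l k M (j / l)) (j % l) = _
    rw [ih]
    unfold synchPart
    rw [Set.image_image]
    rfl

private lemma exists_mul_mod_gcd (a q : ℕ) (hq : 0 < q) :
    ∃ n : ℕ, n * a % q = Nat.gcd a q % q := by
  haveI : NeZero q := ⟨hq.ne'⟩
  have bez : (Nat.gcd a q : ℤ) = a * Nat.gcdA a q + q * Nat.gcdB a q := Nat.gcd_eq_gcd_ab a q
  refine ⟨((Nat.gcdA a q : ℤ) : ZMod q).val, ?_⟩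
  have h1 : ((((Nat.gcdA a q : ℤ) : ZMod q).val : ℕ) : ZMod q) = ((Nat.gcdA a q : ℤ) : ZMod q) :=
    ZMod.natCast_rightInverse _
  have h2 : ((Nat.gcd a q : ℕ) : ZMod q) = (a : ZMod q) * ((Nat.gcdA a q : ℤ) : ZMod q) := by
    have h3 := congrArg (fun z : ℤ => (z : ZMod q)) bez
    push_cast at h3
    simpa [ZMod.natCast_self] using h3
  have h4 : ((((Nat.gcdA a q : ℤ) : ZMod q).val * a : ℕ) : ZMod q)
      = ((Nat.gcd a q : ℕ) : ZMod q) := by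
    push_cast
    rw [h1, h2]; ring
  exact (ZMod.natCast_eq_natCast_iff _ _ _).mp h4

theorem quasiBijective_iff_synchronizing_fixedPoint_periodic
    {A : Type*} [Finite A] (l : ℕ) (hl : 2 ≤ l)
    (θ : A → ℕ → A) (hθ : SubstPrimitive θ l)
    (M₀ : Set A) (hM₀ : M₀ ∈ columnSets θ l) (hfix : synchPart θ M₀ 0 = M₀) :
    (∃ n₀ : ℕ, ∀ n, n₀ ≤ n → ∀ j, j < l ^ n →
        ((fun a => substIter θ l n a j) '' Set.univ).ncard = columnNumber θ l) ↔
      IsPeriodicSeq (substFixedPoint (synchPart θ) l M₀) := by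
  classical
  have hl1 : 1 ≤ l := by omega
  have hl0 : 0 < l := by omega
  have hlt : 1 < l := hl
  have hpow : ∀ n : ℕ, n < l ^ (n + 1) := fun n =>
    lt_of_lt_of_le (Nat.lt_pow_self hlt : n < l ^ n) (Nat.pow_le_pow_right hl0 (Nat.le_succ n))
  obtain ⟨⟨k₀, hk₀, j₀, hj₀, hM₀eq⟩, hM₀card⟩ := hM₀
  set u : ℕ → Set A := substFixedPoint (synchPart θ) l M₀ with hudef
  set c := columnNumber θ l with hcdef
  have hcle : ∀ k j, 1 ≤ k → j < l ^ k →
      c ≤ ((fun a => substIter θ l k a j) '' Set.univ).ncard := by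
    intro k j hk hj
    rw [hcdef]
    unfold columnNumber columnNumberOn
    exact Nat.sInf_le ⟨k, hk, j, hj, rfl⟩
  obtain ⟨k₁, hk₁, j₁, hj₁, hcard₁⟩ :
      ∃ k, 1 ≤ k ∧ ∃ j, j < l ^ k ∧
        ((fun a => substIter θ l k a j) '' (Set.univ : Set A)).ncard = c := by
    have hne : { n : ℕ | ∃ k, 1 ≤ k ∧ ∃ j, j < l ^ k ∧
        ((fun a => substIter θ l k a j) '' (Set.univ : Set A)).ncard = n }.Nonempty :=
      ⟨((fun a => substIter θ l 1 a 0) '' (Set.univ : Set A)).ncard, 1, le_refl 1, 0,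
        by simpa using hl0, rfl⟩
    have h := Nat.sInf_mem hne
    rw [hcdef]
    unfold columnNumber columnNumberOn
    exact h
  set M₁ := (fun a => substIter θ l k₁ a j₁) '' (Set.univ : Set A) with hM₁def
  -- basic facts about u
  have hu_eq : ∀ n, u n = substIter (synchPart θ) l (n + 1) M₀ n := fun n => rfl
  have hu0 : u 0 = M₀ := by
    rw [hu_eq]
    show synchPart θ (substIter (synchPart θ) l 0 M₀ (0 / l)) (0 % l) = M₀
    simpa [substIter] using hfix
  have hstep1 : ∀ k n, n < l ^ k →
      substIter (synchPart θ) l (k + 1) M₀ n = substIter (synchPart θ) l k M₀ n := by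
    intro k n hn
    have h := substIter_add' (synchPart θ) l hl1 k 1 M₀ 0 n hn
    have h0 : substIter (synchPart θ) l 1 M₀ 0 = M₀ := by
      show synchPart θ (substIter (synchPart θ) l 0 M₀ (0 / l)) (0 % l) = M₀
      simpa [substIter] using hfix
    rw [h0, show (1 : ℕ) + k = k + 1 from Nat.add_comm 1 k,
      show 0 * l ^ k + n = n by simp] at h
    exact h
  have hstable : ∀ d k n, n < l ^ k →
      substIter (synchPart θ) l (k + d) M₀ n = substIter (synchPart θ) l k M₀ n := by
    intro d
    induction d with
    | zero => intro k n _; rfl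
    | succ d ih =>
      intro k n hn
      have h1 : substIter (synchPart θ) l ((k + d) + 1) M₀ n
          = substIter (synchPart θ) l (k + d) M₀ n :=
        hstep1 (k + d) n (lt_of_lt_of_le hn (Nat.pow_le_pow_right hl0 (by omega)))
      rw [show k + (d + 1) = (k + d) + 1 from rfl, h1, ih k n hn]
  have huk : ∀ k n, n < l ^ k → substIter (synchPart θ) l k M₀ n = u n := by
    intro k n hn
    rcases le_total k (n + 1) with h | h
    · have h2 := hstable (n + 1 - k) k n hn
      rw [show k + (n + 1 - k) = n + 1 from by omega] at h2
      rw [hu_eq n]; exact h2.symm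
    · have h2 := hstable (k - (n + 1)) (n + 1) n (hpow n)
      rw [show (n + 1) + (k - (n + 1)) = k from by omega] at h2
      rw [hu_eq n]; exact h2
  have hu_img : ∀ n k j, j < l ^ k →
      u (n * l ^ k + j) = (fun a => substIter θ l k a j) '' u n := by
    intro n k j hj
    have hb : n * l ^ k + j < l ^ ((n + 1) + k) := by
      calc n * l ^ k + j < n * l ^ k + l ^ k := Nat.add_lt_add_left hj _
        _ = (n + 1) * l ^ k := by ring
        _ ≤ l ^ (n + 1) * l ^ k := mul_le_mul_left (hpow n) _
        _ = l ^ ((n + 1) + k) := (pow_add l (n + 1) k).symm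
    have h1 := substIter_add' (synchPart θ) l hl1 k (n + 1) M₀ n j hj
    rw [huk _ _ hb, ← hu_eq n] at h1
    rw [h1, substIter_synchPart' θ l k (u n) j]
  have hshape : ∀ n, ∃ K J, 1 ≤ K ∧ J < l ^ K ∧
      u n = (fun a => substIter θ l K a J) '' Set.univ := by
    intro n
    refine ⟨k₀ + (n + 1), j₀ * l ^ (n + 1) + n, by omega, ?_, ?_⟩
    · calc j₀ * l ^ (n + 1) + n < j₀ * l ^ (n + 1) + l ^ (n + 1) :=
            Nat.add_lt_add_left (hpow n) _
        _ = (j₀ + 1) * l ^ (n + 1) := by ring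
        _ ≤ l ^ k₀ * l ^ (n + 1) := mul_le_mul_left hj₀ _
        _ = l ^ (k₀ + (n + 1)) := (pow_add l k₀ (n + 1)).symm
    · have h1 : u n = (fun a => substIter θ l (n + 1) a n) '' M₀ := by
        rw [hu_eq n]; exact substIter_synchPart' θ l (n + 1) M₀ n
      rw [h1, hM₀eq, Set.image_image]
      exact Set.image_congr fun a _ => (substIter_add' θ l hl1 (n + 1) k₀ a j₀ n (hpow n)).symm
  have hu_card : ∀ n, (u n).ncard = c := by
    intro n
    obtain ⟨K, J, hK, hJ, he⟩ := hshape n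
    apply le_antisymm
    · have h1 : u n = (fun a => substIter θ l (n + 1) a n) '' M₀ := by
        rw [hu_eq n]; exact substIter_synchPart' θ l (n + 1) M₀ n
      rw [h1, ← hM₀card]
      exact Set.ncard_image_le (Set.toFinite _)
    · rw [he]; exact hcle K J hK hJ
  have hM₁ : ∀ n, (fun a => substIter θ l k₁ a j₁) '' u n = M₁ := by
    intro n
    obtain ⟨K, J, hK, hJ, he⟩ := hshape n
    have hsub : (fun a => substIter θ l k₁ a j₁) '' u n ⊆ M₁ := by
      rw [hM₁def]; exact Set.image_mono (Set.subset_univ _)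
    have hb : J * l ^ k₁ + j₁ < l ^ (K + k₁) := by
      calc J * l ^ k₁ + j₁ < J * l ^ k₁ + l ^ k₁ := Nat.add_lt_add_left hj₁ _
        _ = (J + 1) * l ^ k₁ := by ring
        _ ≤ l ^ K * l ^ k₁ := mul_le_mul_left hJ _
        _ = l ^ (K + k₁) := (pow_add l K k₁).symm
    have he2 : (fun a => substIter θ l k₁ a j₁) '' u n =
        (fun a => substIter θ l (K + k₁) a (J * l ^ k₁ + j₁)) '' Set.univ := by
      rw [he, Set.image_image]
      exact Set.image_congr fun a _ => (substIter_add' θ l hl1 k₁ K a J j₁ hj₁).symm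
    refine Set.eq_of_subset_of_ncard_le hsub ?_ (Set.toFinite _)
    rw [hcard₁, he2]
    exact hcle (K + k₁) _ (by omega) hb
  have cover : ∀ a : A, ∃ m, a ∈ u m := by
    intro a
    have hc1 : 1 ≤ c := by
      rw [← hcard₁]
      have hne : M₁.Nonempty := ⟨substIter θ l k₁ a j₁, Set.mem_image_of_mem _ (Set.mem_univ a)⟩
      rw [hM₁def] at hne ⊢
      exact (Set.ncard_pos (Set.toFinite _)).mpr hne
    have hM₀ne : M₀.Nonempty := Set.nonempty_of_ncard_ne_zero (by rw [hM₀card]; omega)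
    obtain ⟨b, hb⟩ := hM₀ne
    obtain ⟨k₂, hk₂, hprim⟩ := hθ
    obtain ⟨i, hi, hoc⟩ := hprim b a
    refine ⟨i, ?_⟩
    have h1 : u (0 * l ^ k₂ + i) = (fun a => substIter θ l k₂ a i) '' u 0 := hu_img 0 k₂ i hi
    rw [hu0] at h1
    rw [show (0 : ℕ) * l ^ k₂ + i = i by simp] at h1
    rw [h1]
    exact ⟨b, hb, hoc⟩
  have hmodeq : ∀ (q : ℕ), 0 < q → (∀ n, u (n + q) = u n) →
      ∀ x y : ℕ, x % q = y % q → u x = u y := by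
    intro q hq hpq
    have key : ∀ t r, u (r + t * q) = u r := by
      intro t
      induction t with
      | zero => intro r; simp
      | succ t ih =>
        intro r
        rw [show r + (t + 1) * q = (r + t * q) + q by ring, hpq, ih]
    have key2 : ∀ x, u x = u (x % q) := by
      intro x
      conv_lhs => rw [show x = x % q + (x / q) * q from (Nat.mod_add_div' x q).symm]
      exact key _ _
    intro x y h; rw [key2 x, key2 y, h]
  constructor
  · -- quasi-bijective ⇒ periodic
    rintro ⟨n₀, hqb⟩
    set k := max n₀ 1 with hk
    have hlk : 0 < l ^ k := pow_pos hl0 k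
    have key : ∀ m : ℕ, u m = (fun a => substIter θ l k a (m % l ^ k)) '' Set.univ := by
      intro m
      have hr : m % l ^ k < l ^ k := Nat.mod_lt _ hlk
      have h1 : u m = (fun a => substIter θ l k a (m % l ^ k)) '' u (m / l ^ k) := by
        conv_lhs => rw [show m = (m / l ^ k) * l ^ k + m % l ^ k from (Nat.div_add_mod' m (l ^ k)).symm]
        exact hu_img (m / l ^ k) k (m % l ^ k) hr
      have h2 : ((fun a => substIter θ l k a (m % l ^ k)) '' Set.univ).ncard = c :=
        hqb k (le_max_left _ _) _ hr
      refine Set.eq_of_subset_of_ncard_le ?_ ?_ (Set.toFinite _)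
      · rw [h1]; exact Set.image_mono (Set.subset_univ _)
      · rw [h2, hu_card m]
    refine ⟨l ^ k, hlk, fun n => ?_⟩
    rw [key (n + l ^ k), key n, Nat.add_mod_right]
  · -- periodic ⇒ quasi-bijective
    rintro ⟨p, hp1, hperp⟩
    have hp0 : 0 < p := hp1
    set g' := Nat.gcd (l ^ k₁) p with hg'
    have stepA : ∀ n, u (n * l ^ k₁ + j₁) = M₁ := fun n => (hu_img n k₁ j₁ hj₁).trans (hM₁ n)
    have huj₁ : u j₁ = M₁ := by
      have h := stepA 0
      rwa [show (0 : ℕ) * l ^ k₁ + j₁ = j₁ by simp] at h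
    obtain ⟨nz, hnz⟩ := exists_mul_mod_gcd (l ^ k₁) p hp0
    have stepB : ∀ m, m % g' = j₁ % g' → u m = M₁ := by
      intro m hm
      have hid : m + g' * (j₁ / g') = j₁ + g' * (m / g') := by
        conv_lhs => rw [← Nat.mod_add_div m g']
        conv_rhs => rw [← Nat.mod_add_div j₁ g']
        rw [hm]; ring
      have h1 : j₁ / g' + (p - j₁ / g' % p) = p * (j₁ / g' / p) + p := by
        have h := Nat.mod_add_div (j₁ / g') p
        have h' : j₁ / g' % p < p := Nat.mod_lt _ hp0
        omega
      have hmod : ((m / g' + (p - j₁ / g' % p)) * nz * l ^ k₁ + j₁) % p = m % p := by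
        have h2 : ((m / g' + (p - j₁ / g' % p)) * nz * l ^ k₁) % p
            = ((m / g' + (p - j₁ / g' % p)) * g') % p := by
          rw [show (m / g' + (p - j₁ / g' % p)) * nz * l ^ k₁
              = (m / g' + (p - j₁ / g' % p)) * (nz * l ^ k₁) by ring]
          exact Nat.ModEq.mul_left _ hnz
        have h3 : (m / g' + (p - j₁ / g' % p)) * g' + j₁
            = m + p * ((j₁ / g' / p + 1) * g') := by
          zify
          zify at hid h1
          linear_combination (-1 : ℤ) * hid + (g' : ℤ) * h1
        calc ((m / g' + (p - j₁ / g' % p)) * nz * l ^ k₁ + j₁) % p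
            = ((m / g' + (p - j₁ / g' % p)) * g' + j₁) % p := Nat.ModEq.add_right _ h2
          _ = (m + p * ((j₁ / g' / p + 1) * g')) % p := by rw [h3]
          _ = m % p := Nat.add_mul_mod_self_left m p _
      exact (hmodeq p hp0 hperp m _ hmod.symm).trans (stepA _)
    set H := Nat.gcd (g' * l ^ p) p with hH
    have hHpos : 0 < H := Nat.gcd_pos_of_pos_right _ hp0
    have hHdvd : H ∣ l ^ (k₁ + p) := by
      have h1 : H ∣ g' * l ^ p := Nat.gcd_dvd_left _ _
      have h2 : g' ∣ l ^ k₁ := Nat.gcd_dvd_left _ _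
      have h3 : g' * l ^ p ∣ l ^ (k₁ + p) := by
        rw [pow_add]; exact mul_dvd_mul h2 dvd_rfl
      exact h1.trans h3
    obtain ⟨nH, hnH⟩ := exists_mul_mod_gcd (g' * l ^ p) p hp0
    have hplp : p ≤ l ^ p := (Nat.lt_pow_self hlt : p < l ^ p).le
    have hperH : ∀ x, u (x + H) = u x := by
      intro x
      have hDge : j₁ * l ^ p ≤ p * l ^ (k₁ + p) := by
        calc j₁ * l ^ p ≤ l ^ k₁ * l ^ p := mul_le_mul_left hj₁.le _
          _ = l ^ (k₁ + p) := (pow_add l k₁ p).symm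
          _ ≤ p * l ^ (k₁ + p) := Nat.le_mul_of_pos_left _ hp0
      set j := (x + p * l ^ (k₁ + p) - j₁ * l ^ p) % p with hjdef
      have hjlt : j < l ^ p := lt_of_lt_of_le (Nat.mod_lt _ hp0) hplp
      have hα : (j₁ * l ^ p + j) % p = x % p := by
        have e1 : (j₁ * l ^ p + j) % p
            = (j₁ * l ^ p + (x + p * l ^ (k₁ + p) - j₁ * l ^ p)) % p :=
          Nat.ModEq.add_left _ (Nat.mod_modEq _ p)
        rw [e1, show j₁ * l ^ p + (x + p * l ^ (k₁ + p) - j₁ * l ^ p)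
            = x + p * l ^ (k₁ + p) from by omega, Nat.add_mul_mod_self_left]
      have hm'mod : (j₁ + nH * g') % g' = j₁ % g' := Nat.add_mul_mod_self_right j₁ nH g'
      have hβ : ((j₁ + nH * g') * l ^ p + j) % p = (x + H) % p := by
        rw [show (j₁ + nH * g') * l ^ p + j = (j₁ * l ^ p + j) + nH * (g' * l ^ p) by ring]
        exact Nat.ModEq.add hα hnH
      calc u (x + H) = u ((j₁ + nH * g') * l ^ p + j) := hmodeq p hp0 hperp _ _ hβ.symm
        _ = (fun a => substIter θ l p a j) '' u (j₁ + nH * g') := hu_img _ p j hjlt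
        _ = (fun a => substIter θ l p a j) '' M₁ := by rw [stepB _ hm'mod]
        _ = (fun a => substIter θ l p a j) '' u j₁ := by rw [huj₁]
        _ = u (j₁ * l ^ p + j) := (hu_img j₁ p j hjlt).symm
        _ = u x := hmodeq p hp0 hperp _ _ hα
    refine ⟨k₁ + p + 1, fun n hn j hj => ?_⟩
    have hHn : H ∣ l ^ n := hHdvd.trans (pow_dvd_pow l (by omega))
    apply le_antisymm ?_ (hcle n j (by omega) hj)
    have hsub : (fun a => substIter θ l n a j) '' Set.univ ⊆ u j := by
      rintro x ⟨a, -, rfl⟩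
      obtain ⟨m, hm⟩ := cover a
      have h1 : substIter θ l n a j ∈ u (m * l ^ n + j) := by
        rw [hu_img m n j hj]; exact ⟨a, hm, rfl⟩
      have h2 : u (m * l ^ n + j) = u j := by
        apply hmodeq H hHpos hperH
        obtain ⟨t, ht⟩ := hHn
        rw [ht, show m * (H * t) + j = j + H * (m * t) by ring]
        exact Nat.add_mul_mod_self_left j H (m * t)
      rwa [h2] at h1
    calc ((fun a => substIter θ l n a j) '' Set.univ).ncard ≤ (u j).ncard :=
          Set.ncard_le_ncard hsub (Set.toFinite _)
      _ = c := hu_card j
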